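/- Let 0 ≤ a ≤ p^s − 1 and let C be the ideal of S generated by u²(x − δ_{0,0})^a. Then Tor_0(C) and Tor_1(C) are the zero ideal of F[x]/⟨(x − δ_{0,0})^{p^s}⟩ (so the torsional degrees T_0(C) and T_1(C) both equal p^s), Tor_2(C) = ⟨(x − δ_{0,0})^a⟩ (so T_2(C) = a), and C has exactly p^{m(p^s − a)} elements. -/

import Mathlib

open Polynomial

/-- The finite chain ring `R^t = 𝔽_{p^m}[u]/⟨u^t⟩`. -/
abbrev Rt (p m t : ℕ) [Fact p.Prime] : Type _ :=
  Polynomial (GaloisField p m) ⧸ Ideal.span {(X : Polynomial (GaloisField p m)) ^ t}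

noncomputable instance (p m t : ℕ) [Fact p.Prime] : CommRing (Rt p m t) :=
  Ideal.Quotient.commRing _

/-- The canonical projection `𝔽_{p^m}[u] → R^t`. -/
noncomputable def mkRt (p m t : ℕ) [Fact p.Prime] :
    Polynomial (GaloisField p m) →+* Rt p m t :=
  Ideal.Quotient.mk _

/-- The element `u ∈ R^t`. -/
noncomputable def uRt (p m t : ℕ) [Fact p.Prime] : Rt p m t := mkRt p m t X

/-- The canonical embedding `𝔽_{p^m} → R^t`. -/
noncomputable def κ (p m t : ℕ) [Fact p.Prime] : GaloisField p m →+* Rt p m t :=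
  (mkRt p m t).comp (C : GaloisField p m →+* Polynomial (GaloisField p m))

/-- The quotient ring `R^t[x]/⟨x^N − δ⟩`. -/
abbrev Qr (p m t : ℕ) [Fact p.Prime] (N : ℕ) (δ : Rt p m t) : Type _ :=
  Polynomial (Rt p m t) ⧸ Ideal.span {(X : Polynomial (Rt p m t)) ^ N - C δ}

/-- The canonical projection `R^t[x] → R^t[x]/⟨x^N − δ⟩`. -/
noncomputable def mkQr (p m t : ℕ) [Fact p.Prime] (N : ℕ) (δ : Rt p m t) :
    Polynomial (Rt p m t) →+* Qr p m t N δ :=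
  Ideal.Quotient.mk _

/-- The ring `S = R³[x]/⟨x^{p^s} − δ⟩` where `δ = δ₀ + u²δ₂`. -/
abbrev Sdel (p m s : ℕ) [Fact p.Prime] (d0 d2 : GaloisField p m) : Type _ :=
  Qr p m 3 (p ^ s) (mkRt p m 3 (C d0 + C d2 * X ^ 2))

/-- The ring `𝔽_{p^m}[x]/⟨(x − δ_{0,0})^{p^s}⟩`. -/
abbrev Qbar (p m s : ℕ) [Fact p.Prime] (δ00 : GaloisField p m) : Type _ :=
  Polynomial (GaloisField p m) ⧸
    Ideal.span {((X : Polynomial (GaloisField p m)) - C δ00) ^ p ^ s}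

/-- The canonical projection onto `𝔽_{p^m}[x]/⟨(x − δ_{0,0})^{p^s}⟩`. -/
noncomputable def mkQbar (p m s : ℕ) [Fact p.Prime] (δ00 : GaloisField p m) :
    Polynomial (GaloisField p m) →+* Qbar p m s δ00 :=
  Ideal.Quotient.mk _

/-- Reduction modulo `u`, as a ring homomorphism `R³ → 𝔽_{p^m}`. -/
noncomputable def pi0 (p m : ℕ) [Fact p.Prime] : Rt p m 3 →+* GaloisField p m :=
  Ideal.Quotient.lift _ (evalRingHom (0 : GaloisField p m)) (by
    intro f hf
    rw [Ideal.mem_span_singleton] at hf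
    obtain ⟨c, rfl⟩ := hf
    simp)

/-- The reduction-mod-`u` homomorphism `μ : S → 𝔽_{p^m}[x]/⟨(x − δ_{0,0})^{p^s}⟩`. -/
noncomputable def muS (p m s : ℕ) [Fact p.Prime] (d0 d2 δ00 : GaloisField p m)
    (hδ00 : δ00 ^ p ^ s = d0) : Sdel p m s d0 d2 →+* Qbar p m s δ00 :=
  Ideal.Quotient.lift _ ((mkQbar p m s δ00).comp (mapRingHom (pi0 p m))) (by
    intro f hf
    rw [Ideal.mem_span_singleton] at hf
    obtain ⟨c, rfl⟩ := hf
    rw [map_mul]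
    have h1 : pi0 p m (mkRt p m 3 (C d0 + C d2 * X ^ 2)) = d0 := by
      show Ideal.Quotient.lift _ _ _ (Ideal.Quotient.mk _ _) = d0
      rw [Ideal.Quotient.lift_mk]
      simp
    have h2 : ((mkQbar p m s δ00).comp (mapRingHom (pi0 p m)))
        (X ^ p ^ s - C (mkRt p m 3 (C d0 + C d2 * X ^ 2))) = 0 := by
      rw [RingHom.comp_apply, coe_mapRingHom, Polynomial.map_sub, Polynomial.map_pow,
        Polynomial.map_X, Polynomial.map_C, h1]
      have h3 : ((X : Polynomial (GaloisField p m)) - C δ00) ^ p ^ s = X ^ p ^ s - C d0 := by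
        rw [sub_pow_char_pow, ← Polynomial.C_pow, hδ00]
      show mkQbar p m s δ00 _ = 0
      unfold mkQbar
      rw [Ideal.Quotient.eq_zero_iff_mem, Ideal.mem_span_singleton, h3]
    rw [h2, zero_mul])

/-- The element `u ∈ S`. -/
noncomputable def uS (p m s : ℕ) [Fact p.Prime] (d0 d2 : GaloisField p m) :
    Sdel p m s d0 d2 :=
  mkQr p m 3 (p ^ s) (mkRt p m 3 (C d0 + C d2 * X ^ 2)) (C (uRt p m 3))

/-- The element `x − δ_{0,0} ∈ S`. -/
noncomputable def θS (p m s : ℕ) [Fact p.Prime] (d0 d2 δ00 : GaloisField p m) :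
    Sdel p m s d0 d2 :=
  mkQr p m 3 (p ^ s) (mkRt p m 3 (C d0 + C d2 * X ^ 2)) (X - C (κ p m 3 δ00))
lemma S_mem_span {p m s : ℕ} [Fact p.Prime] {d0 d2 : GaloisField p m}
    {x y : Sdel p m s d0 d2} : x ∈ Ideal.span {y} ↔ y ∣ x :=
  Ideal.mem_span_singleton (α := Sdel p m s d0 d2)

section Aux
variable (p m s : ℕ) [Fact p.Prime]

lemma uRt_pow3 : uRt p m 3 ^ 3 = 0 := by
  show mkRt p m 3 X ^ 3 = 0
  rw [← map_pow, mkRt, Ideal.Quotient.eq_zero_iff_mem]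
  exact Ideal.subset_span rfl

lemma Rt_u_ann (r : Rt p m 3) (h : uRt p m 3 * r = 0) :
    ∃ e : Rt p m 3, r = uRt p m 3 ^ 2 * e := by
  obtain ⟨f, rfl⟩ := Ideal.Quotient.mk_surjective r
  have h' : mkRt p m 3 (X * f) = 0 := by rw [map_mul]; exact h
  rw [mkRt, Ideal.Quotient.eq_zero_iff_mem, Ideal.mem_span_singleton] at h'
  obtain ⟨g, hg⟩ := h'
  have hX : (X : Polynomial (GaloisField p m)) ≠ 0 := X_ne_zero
  have hf : f = X ^ 2 * g := by
    apply mul_left_cancel₀ hX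
    rw [hg]; ring
  refine ⟨mkRt p m 3 g, ?_⟩
  show mkRt p m 3 f = _
  rw [hf, map_mul, map_pow]
  rfl

lemma Rt_u2_ann (r : Rt p m 3) (h : uRt p m 3 ^ 2 * r = 0) :
    ∃ e : Rt p m 3, r = uRt p m 3 * e := by
  obtain ⟨f, rfl⟩ := Ideal.Quotient.mk_surjective r
  have h' : mkRt p m 3 (X ^ 2 * f) = 0 := by rw [map_mul, map_pow]; exact h
  rw [mkRt, Ideal.Quotient.eq_zero_iff_mem, Ideal.mem_span_singleton] at h'
  obtain ⟨g, hg⟩ := h'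
  have hX : (X : Polynomial (GaloisField p m)) ^ 2 ≠ 0 := pow_ne_zero _ X_ne_zero
  have hf : f = X * g := by
    apply mul_left_cancel₀ hX
    rw [hg]; ring
  refine ⟨mkRt p m 3 g, ?_⟩
  show mkRt p m 3 f = _
  rw [hf, map_mul]
  rfl

lemma Rt_decomp (r : Rt p m 3) : ∃ (e : GaloisField p m) (r' : Rt p m 3),
    r = κ p m 3 e + uRt p m 3 * r' := by
  obtain ⟨f, rfl⟩ := Ideal.Quotient.mk_surjective r
  refine ⟨f.coeff 0, mkRt p m 3 (f.divX), ?_⟩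
  show mkRt p m 3 f = mkRt p m 3 (C (f.coeff 0)) + mkRt p m 3 X * mkRt p m 3 f.divX
  rw [← map_mul, ← map_add]
  congr 1
  rw [add_comm, X_mul_divX_add]

end Aux
section Aux2
variable (p m s : ℕ) [Fact p.Prime] (d0 d2 δ00 : GaloisField p m)

lemma Rt_nontrivial : Nontrivial (Rt p m 3) := by
  apply Ideal.Quotient.nontrivial_iff.mpr
  intro htop
  have h1 : (1 : Polynomial (GaloisField p m)) ∈ Ideal.span {(X : Polynomial (GaloisField p m)) ^ 3} := by
    rw [htop]; trivial
  rw [Ideal.mem_span_singleton] at h1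
  have : IsUnit ((X : Polynomial (GaloisField p m)) ^ 3) := isUnit_of_dvd_one h1
  have : IsUnit (X : Polynomial (GaloisField p m)) :=
    isUnit_of_dvd_unit (dvd_pow_self X (by norm_num)) this
  exact Polynomial.not_isUnit_X this

/-- The defining polynomial of `S` over `R³`. -/
noncomputable def gS : Polynomial (Rt p m 3) :=
  (X : Polynomial (Rt p m 3)) ^ p ^ s - C (mkRt p m 3 (C d0 + C d2 * X ^ 2))

lemma gS_monic : (gS p m s d0 d2).Monic :=
  monic_X_pow_sub_C _ (pow_ne_zero s (Fact.out : p.Prime).ne_zero)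

lemma ps_pos : 0 < p ^ s := pow_pos (Fact.out : p.Prime).pos s

lemma S_nontrivial : Nontrivial (Sdel p m s d0 d2) := by
  haveI := Rt_nontrivial p m
  apply Ideal.Quotient.nontrivial_iff.mpr
  intro htop
  have h1 : (1 : Polynomial (Rt p m 3)) ∈
      Ideal.span {(X : Polynomial (Rt p m 3)) ^ p ^ s - C (mkRt p m 3 (C d0 + C d2 * X ^ 2))} := by
    rw [htop]; trivial
  rw [Ideal.mem_span_singleton] at h1
  obtain ⟨g, hg⟩ := h1
  have hgne : g ≠ 0 := by
    intro h0
    rw [h0, mul_zero] at hg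
    exact one_ne_zero hg
  have hlc : (gS p m s d0 d2).leadingCoeff * g.leadingCoeff ≠ 0 := by
    rw [(gS_monic p m s d0 d2).leadingCoeff, one_mul]
    exact leadingCoeff_ne_zero.mpr hgne
  have h3 := natDegree_mul' hlc
  have h2 : (gS p m s d0 d2).natDegree = p ^ s := by
    unfold gS
    rw [natDegree_X_pow_sub_C]
  rw [h2] at h3
  have h4 : (gS p m s d0 d2 * g).natDegree = 0 := by
    rw [show gS p m s d0 d2 * g = 1 by rw [gS]; exact hg.symm, natDegree_one]
  rw [h3] at h4
  have := ps_pos p s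
  omega

/-- The coefficient embedding `𝔽_{p^m}[x] → S`. -/
noncomputable def βS : Polynomial (GaloisField p m) →+* Sdel p m s d0 d2 :=
  (mkQr p m 3 (p ^ s) (mkRt p m 3 (C d0 + C d2 * X ^ 2))).comp (mapRingHom (κ p m 3))

lemma S_charP : CharP (Sdel p m s d0 d2) p := by
  haveI := S_nontrivial p m s d0 d2
  exact charP_of_injective_ringHom
    (((βS p m s d0 d2).comp (C : GaloisField p m →+* Polynomial (GaloisField p m))).injective) p

lemma uS_pow3 : uS p m s d0 d2 ^ 3 = 0 := by
  show mkQr p m 3 (p ^ s) _ (C (uRt p m 3)) ^ 3 = 0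
  rw [← map_pow, ← C_pow, uRt_pow3, map_zero, map_zero]

end Aux2
section Aux3
variable (p m s : ℕ) [Fact p.Prime] (d0 d2 δ00 : GaloisField p m)

lemma adjoin_ann {R : Type*} [CommRing R] {g : Polynomial R} (hg : g.Monic)
    (w z : R) (hw : ∀ r : R, w * r = 0 → ∃ e, r = z * e)
    (c : AdjoinRoot g) (h : AdjoinRoot.of g w * c = 0) :
    ∃ d : AdjoinRoot g, c = AdjoinRoot.of g z * d := by
  classical
  set B := AdjoinRoot.powerBasis' hg with hB
  have hsmul : w • c = 0 := by
    rw [Algebra.smul_def, AdjoinRoot.algebraMap_eq]; exact h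
  have hrep : ∀ i, w * B.basis.repr c i = 0 := by
    intro i
    have h1 : B.basis.repr (w • c) i = 0 := by rw [hsmul]; simp
    rwa [map_smul, Finsupp.smul_apply, smul_eq_mul] at h1
  choose e he using fun i => hw _ (hrep i)
  refine ⟨∑ i, e i • B.basis i, ?_⟩
  calc c = ∑ i, B.basis.repr c i • B.basis i := (B.basis.sum_repr c).symm
    _ = ∑ i, (z * e i) • B.basis i := by
        refine Finset.sum_congr rfl fun i _ => ?_
        rw [he i]
    _ = AdjoinRoot.of g z * ∑ i, e i • B.basis i := by
        rw [Finset.mul_sum]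
        refine Finset.sum_congr rfl fun i _ => ?_
        rw [mul_smul, ← AdjoinRoot.algebraMap_eq, ← Algebra.smul_def]

lemma uS_eq_of : uS p m s d0 d2 = AdjoinRoot.of (gS p m s d0 d2) (uRt p m 3) := rfl

lemma S_u_ann (c : Sdel p m s d0 d2) (h : uS p m s d0 d2 * c = 0) :
    ∃ d, c = uS p m s d0 d2 ^ 2 * d := by
  have h' : AdjoinRoot.of (gS p m s d0 d2) (uRt p m 3) *
      (show AdjoinRoot (gS p m s d0 d2) from c) = 0 := h
  obtain ⟨d, hd⟩ := adjoin_ann (gS_monic p m s d0 d2) (uRt p m 3) (uRt p m 3 ^ 2)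
    (Rt_u_ann p m) _ h'
  have h2 : AdjoinRoot.of (gS p m s d0 d2) (uRt p m 3 ^ 2) = uS p m s d0 d2 ^ 2 := by
    show mkQr p m 3 (p ^ s) (mkRt p m 3 (C d0 + C d2 * X ^ 2)) (C (uRt p m 3 ^ 2)) = _
    rw [C_pow, map_pow]
    rfl
  rw [h2] at hd
  exact ⟨d, hd⟩

lemma S_u2_ann (c : Sdel p m s d0 d2) (h : uS p m s d0 d2 ^ 2 * c = 0) :
    ∃ d, c = uS p m s d0 d2 * d := by
  have h2 : AdjoinRoot.of (gS p m s d0 d2) (uRt p m 3 ^ 2) = uS p m s d0 d2 ^ 2 := by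
    show mkQr p m 3 (p ^ s) (mkRt p m 3 (C d0 + C d2 * X ^ 2)) (C (uRt p m 3 ^ 2)) = _
    rw [C_pow, map_pow]
    rfl
  have h' : AdjoinRoot.of (gS p m s d0 d2) (uRt p m 3 ^ 2) *
      (show AdjoinRoot (gS p m s d0 d2) from c) = 0 := by
    rw [h2]; exact h
  obtain ⟨d, hd⟩ := adjoin_ann (gS_monic p m s d0 d2) (uRt p m 3 ^ 2) (uRt p m 3)
    (Rt_u2_ann p m) _ h'
  have h3 : AdjoinRoot.of (gS p m s d0 d2) (uRt p m 3) = uS p m s d0 d2 := rfl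
  rw [h3] at hd
  exact ⟨d, hd⟩

lemma pi0_kappa (e : GaloisField p m) : pi0 p m (κ p m 3 e) = e := by
  show Ideal.Quotient.lift _ _ _ (Ideal.Quotient.mk _ (C e)) = e
  rw [Ideal.Quotient.lift_mk]
  simp

lemma pi0_u : pi0 p m (uRt p m 3) = 0 := by
  show Ideal.Quotient.lift _ _ _ (Ideal.Quotient.mk _ X) = 0
  rw [Ideal.Quotient.lift_mk]
  simp

lemma u_dvd_sub_kappa (r : Rt p m 3) : uRt p m 3 ∣ r - κ p m 3 (pi0 p m r) := by
  obtain ⟨e, r', rfl⟩ := Rt_decomp p m (r := r)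
  rw [map_add, pi0_kappa, map_mul, pi0_u, zero_mul, add_zero]
  exact ⟨r', by ring⟩

lemma S_decomp (t : Sdel p m s d0 d2) :
    ∃ (g : Polynomial (GaloisField p m)) (t' : Sdel p m s d0 d2),
      t = βS p m s d0 d2 g + uS p m s d0 d2 * t' := by
  obtain ⟨F, rfl⟩ := Ideal.Quotient.mk_surjective t
  have hdvd : C (uRt p m 3) ∣ F - (F.map (pi0 p m)).map (κ p m 3) := by
    rw [Polynomial.C_dvd_iff_dvd_coeff]
    intro i
    rw [coeff_sub, coeff_map, coeff_map]
    exact u_dvd_sub_kappa p m _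
  obtain ⟨G, hG⟩ := hdvd
  refine ⟨F.map (pi0 p m),
    mkQr p m 3 (p ^ s) (mkRt p m 3 (C d0 + C d2 * X ^ 2)) G, ?_⟩
  have hF : F = (F.map (pi0 p m)).map (κ p m 3) + C (uRt p m 3) * G := by
    rw [← hG]; ring
  have h5 := congrArg (mkQr p m 3 (p ^ s) (mkRt p m 3 (C d0 + C d2 * X ^ 2))) hF
  rw [map_add, map_mul] at h5
  exact h5

variable (hδ00 : δ00 ^ p ^ s = d0)

lemma muS_mk (f : Polynomial (Rt p m 3)) :
    muS p m s d0 d2 δ00 hδ00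
        (mkQr p m 3 (p ^ s) (mkRt p m 3 (C d0 + C d2 * X ^ 2)) f) =
      mkQbar p m s δ00 (f.map (pi0 p m)) := by
  show Ideal.Quotient.lift _ _ _ (Ideal.Quotient.mk _ f) = _
  rw [Ideal.Quotient.lift_mk]
  rfl

lemma mu_beta (g : Polynomial (GaloisField p m)) :
    muS p m s d0 d2 δ00 hδ00 (βS p m s d0 d2 g) = mkQbar p m s δ00 g := by
  have h1 : βS p m s d0 d2 g =
      mkQr p m 3 (p ^ s) (mkRt p m 3 (C d0 + C d2 * X ^ 2)) (g.map (κ p m 3)) := rfl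
  rw [h1, muS_mk, Polynomial.map_map]
  have h2 : (pi0 p m).comp (κ p m 3) = RingHom.id _ := RingHom.ext (pi0_kappa p m)
  rw [h2, Polynomial.map_id]

lemma mu_u : muS p m s d0 d2 δ00 hδ00 (uS p m s d0 d2) = 0 := by
  show muS p m s d0 d2 δ00 hδ00
      (mkQr p m 3 (p ^ s) (mkRt p m 3 (C d0 + C d2 * X ^ 2)) (C (uRt p m 3))) = 0
  rw [muS_mk, map_C, pi0_u, map_zero, map_zero]

lemma thetaS_eq : θS p m s d0 d2 δ00 = βS p m s d0 d2 (X - C δ00) := by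
  have h1 : βS p m s d0 d2 (X - C δ00) =
      mkQr p m 3 (p ^ s) (mkRt p m 3 (C d0 + C d2 * X ^ 2)) ((X - C δ00).map (κ p m 3)) := rfl
  rw [h1, Polynomial.map_sub, Polynomial.map_X, Polynomial.map_C]
  rfl

lemma mu_theta : muS p m s d0 d2 δ00 hδ00 (θS p m s d0 d2 δ00) =
    mkQbar p m s δ00 (X - C δ00) := by
  rw [thetaS_eq, mu_beta]

lemma mkQbar_zero_iff (g : Polynomial (GaloisField p m)) :
    mkQbar p m s δ00 g = 0 ↔ ((X : Polynomial (GaloisField p m)) - C δ00) ^ p ^ s ∣ g := by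
  rw [mkQbar, Ideal.Quotient.eq_zero_iff_mem, Ideal.mem_span_singleton]

end Aux3
section Aux4
variable (p m s : ℕ) [Fact p.Prime] (d0 d2 δ00 : GaloisField p m)

/-- The embedding `R³ → S`. -/
noncomputable def ofS : Rt p m 3 →+* Sdel p m s d0 d2 :=
  (mkQr p m 3 (p ^ s) (mkRt p m 3 (C d0 + C d2 * X ^ 2))).comp C

lemma ofS_u : ofS p m s d0 d2 (uRt p m 3) = uS p m s d0 d2 := rfl

lemma ofS_kappa (e : GaloisField p m) :
    ofS p m s d0 d2 (κ p m 3 e) = βS p m s d0 d2 (C e) := by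
  have h1 : βS p m s d0 d2 (C e) =
      mkQr p m 3 (p ^ s) (mkRt p m 3 (C d0 + C d2 * X ^ 2)) ((C e).map (κ p m 3)) := rfl
  rw [h1, Polynomial.map_C]
  rfl

lemma theta_pow (hδ00 : δ00 ^ p ^ s = d0) :
    θS p m s d0 d2 δ00 ^ p ^ s = uS p m s d0 d2 ^ 2 * βS p m s d0 d2 (C d2) := by
  haveI := S_charP p m s d0 d2
  rw [thetaS_eq, map_sub, sub_pow_char_pow (x := βS p m s d0 d2 X), ← map_pow, ← map_pow, ← C_pow, hδ00]
  have hX : βS p m s d0 d2 (X ^ p ^ s) =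
      ofS p m s d0 d2 (mkRt p m 3 (C d0 + C d2 * X ^ 2)) := by
    have e0 : βS p m s d0 d2 (X ^ p ^ s) = mkQr p m 3 (p ^ s)
        (mkRt p m 3 (C d0 + C d2 * X ^ 2)) ((X ^ p ^ s : Polynomial (GaloisField p m)).map (κ p m 3)) := rfl
    have e1 : (X ^ p ^ s : Polynomial (GaloisField p m)).map (κ p m 3) =
        (X ^ p ^ s : Polynomial (Rt p m 3)) := by
      rw [Polynomial.map_pow, Polynomial.map_X]
    rw [e0, e1]
    have e2 : ofS p m s d0 d2 (mkRt p m 3 (C d0 + C d2 * X ^ 2)) =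
        mkQr p m 3 (p ^ s) (mkRt p m 3 (C d0 + C d2 * X ^ 2))
          (C (mkRt p m 3 (C d0 + C d2 * X ^ 2))) := rfl
    rw [e2, ← sub_eq_zero, ← map_sub, mkQr, Ideal.Quotient.eq_zero_iff_mem]
    exact Ideal.subset_span rfl
  rw [hX, ← ofS_kappa, ← ofS_kappa]
  have huS : uS p m s d0 d2 = ofS p m s d0 d2 (uRt p m 3) := rfl
  rw [huS, ← map_sub, ← map_pow, ← map_mul]
  congr 1
  show mkRt p m 3 (C d0 + C d2 * X ^ 2) - mkRt p m 3 (C d0) =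
    mkRt p m 3 X ^ 2 * mkRt p m 3 (C d2)
  rw [← map_pow, ← map_mul, ← map_sub]
  congr 1
  ring

lemma u2_beta_zero_iff (hδ00 : δ00 ^ p ^ s = d0) (g : Polynomial (GaloisField p m)) :
    uS p m s d0 d2 ^ 2 * βS p m s d0 d2 g = 0 ↔
      ((X : Polynomial (GaloisField p m)) - C δ00) ^ p ^ s ∣ g := by
  constructor
  · intro h
    obtain ⟨d, hd⟩ := S_u2_ann p m s d0 d2 _ h
    have h1 := congrArg (muS p m s d0 d2 δ00 hδ00) hd
    rw [mu_beta, map_mul, mu_u, zero_mul] at h1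
    rwa [mkQbar_zero_iff] at h1
  · rintro ⟨h, rfl⟩
    rw [map_mul, map_pow]
    have hth : βS p m s d0 d2 (X - C δ00) = θS p m s d0 d2 δ00 := (thetaS_eq p m s d0 d2 δ00).symm
    rw [hth, theta_pow p m s d0 d2 δ00 hδ00]
    have h3 := uS_pow3 p m s d0 d2
    calc uS p m s d0 d2 ^ 2 * (uS p m s d0 d2 ^ 2 * βS p m s d0 d2 (C d2) * βS p m s d0 d2 h)
        = uS p m s d0 d2 ^ 3 *
          (uS p m s d0 d2 * (βS p m s d0 d2 (C d2) * βS p m s d0 d2 h)) := by ring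
      _ = 0 := by rw [h3, zero_mul (uS p m s d0 d2 * (βS p m s d0 d2 (C d2) * βS p m s d0 d2 h))]

lemma theta_beta_pow (a : ℕ) (g : Polynomial (GaloisField p m)) :
    θS p m s d0 d2 δ00 ^ a * βS p m s d0 d2 g =
      βS p m s d0 d2 (((X : Polynomial (GaloisField p m)) - C δ00) ^ a * g) := by
  rw [map_mul, map_pow, ← thetaS_eq]

end Aux4
section Aux5
variable (p m s : ℕ) [Fact p.Prime] (d0 d2 δ00 : GaloisField p m)

lemma card_span (hm : m ≠ 0) (hδ00 : δ00 ^ p ^ s = d0) (a : ℕ) (ha : a ≤ p ^ s - 1) :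
    Nat.card (Ideal.span {uS p m s d0 d2 ^ 2 * θS p m s d0 d2 δ00 ^ a}) =
      p ^ (m * (p ^ s - a)) := by
  classical
  have hps := ps_pos p s
  set n := p ^ s - a with hn
  have han : a + n = p ^ s := by omega
  have hn1 : 1 ≤ n := by omega
  have hu3 := uS_pow3 p m s d0 d2
  set P : (Fin n → GaloisField p m) → Polynomial (GaloisField p m) :=
    fun v => ∑ i : Fin n, C (v i) * (X - C δ00) ^ (i : ℕ) with hP
  have hPdeg : ∀ v, (P v).natDegree < n := by
    intro v
    have h1 : (P v).natDegree ≤ n - 1 := by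
      apply natDegree_sum_le_of_forall_le
      intro i _
      refine (natDegree_C_mul_le _ _).trans ?_
      rw [natDegree_pow, natDegree_X_sub_C, mul_one]
      omega
    omega
  have hzero : ∀ w : Polynomial (GaloisField p m), w.natDegree < n →
      uS p m s d0 d2 ^ 2 * θS p m s d0 d2 δ00 ^ a * βS p m s d0 d2 w = 0 → w = 0 := by
    intro w hw h0
    rw [mul_assoc, theta_beta_pow p m s d0 d2 δ00,
      u2_beta_zero_iff p m s d0 d2 δ00 hδ00, ← han, pow_add] at h0
    have hdvd : ((X : Polynomial (GaloisField p m)) - C δ00) ^ n ∣ w :=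
      (mul_dvd_mul_iff_left (pow_ne_zero a (X_sub_C_ne_zero δ00))).mp h0
    exact eq_zero_of_dvd_of_natDegree_lt hdvd
      (by rw [natDegree_pow, natDegree_X_sub_C, mul_one]; exact hw)
  have hPinj : ∀ v w, P v = P w → v = w := by
    intro v w hvw
    have hcomp : ∀ v : Fin n → GaloisField p m,
        (P v).comp (X + C δ00) = ∑ i : Fin n, C (v i) * X ^ (i : ℕ) := by
      intro v
      show (∑ i : Fin n, C (v i) * (X - C δ00) ^ (i : ℕ)).comp (X + C δ00) = _
      rw [Polynomial.sum_comp]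
      refine Finset.sum_congr rfl fun i _ => ?_
      rw [Polynomial.mul_comp, Polynomial.C_comp, Polynomial.pow_comp, Polynomial.sub_comp,
        Polynomial.X_comp, Polynomial.C_comp, add_sub_cancel_right]
    have hcoeff : ∀ v : Fin n → GaloisField p m, ∀ j : Fin n,
        (∑ i : Fin n, C (v i) * X ^ (i : ℕ)).coeff (j : ℕ) = v j := by
      intro v j
      rw [Polynomial.finset_sum_coeff]
      rw [Finset.sum_eq_single j]
      · rw [coeff_C_mul, coeff_X_pow, if_pos rfl, mul_one]
      · intro i _ hij
        rw [coeff_C_mul, coeff_X_pow, if_neg (fun hh => hij (Fin.ext hh.symm)), mul_zero]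
      · intro hj
        exact absurd (Finset.mem_univ j) hj
    funext j
    have h2 := congrArg (fun q : Polynomial (GaloisField p m) =>
      (q.comp (X + C δ00)).coeff (j : ℕ)) hvw
    simp only [hcomp, hcoeff] at h2
    exact h2
  set gen := uS p m s d0 d2 ^ 2 * θS p m s d0 d2 δ00 ^ a with hgen
  have hmem : ∀ g : Polynomial (GaloisField p m),
      uS p m s d0 d2 ^ 2 * θS p m s d0 d2 δ00 ^ a * βS p m s d0 d2 g ∈
        Ideal.span {gen} := by
    intro g
    exact S_mem_span.mpr ⟨βS p m s d0 d2 g, by rw [hgen]⟩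
  set f : (Fin n → GaloisField p m) → ↥(Ideal.span {gen}) :=
    fun v => ⟨uS p m s d0 d2 ^ 2 * θS p m s d0 d2 δ00 ^ a * βS p m s d0 d2 (P v),
      hmem (P v)⟩ with hf
  have hinj : Function.Injective f := by
    intro v w hvw
    have h1 : uS p m s d0 d2 ^ 2 * θS p m s d0 d2 δ00 ^ a * βS p m s d0 d2 (P v) =
        uS p m s d0 d2 ^ 2 * θS p m s d0 d2 δ00 ^ a * βS p m s d0 d2 (P w) :=
      congrArg Subtype.val hvw
    have h2 : uS p m s d0 d2 ^ 2 * θS p m s d0 d2 δ00 ^ a * βS p m s d0 d2 (P v - P w) = 0 := by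
      rw [map_sub, mul_sub (uS p m s d0 d2 ^ 2 * θS p m s d0 d2 δ00 ^ a), h1, sub_self]
    have h3 : (P v - P w).natDegree < n :=
      lt_of_le_of_lt (natDegree_sub_le _ _) (max_lt (hPdeg v) (hPdeg w))
    have h4 := hzero _ h3 h2
    exact hPinj v w (by rwa [sub_eq_zero] at h4)
  have hsurj : Function.Surjective f := by
    rintro ⟨c, hc⟩
    obtain ⟨t, ht⟩ := S_mem_span.mp hc
    obtain ⟨g, t', hg⟩ := S_decomp p m s d0 d2 t
    have h6 : c = uS p m s d0 d2 ^ 2 * θS p m s d0 d2 δ00 ^ a * βS p m s d0 d2 g := by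
      have h7 : gen * t = gen * βS p m s d0 d2 g +
          uS p m s d0 d2 ^ 3 * (θS p m s d0 d2 δ00 ^ a * t') := by
        rw [hg, hgen]; ring
      rw [ht, h7, hu3, zero_mul (θS p m s d0 d2 δ00 ^ a * t'), add_zero (gen * βS p m s d0 d2 g), hgen]
    set q : Polynomial (GaloisField p m) := ((X : Polynomial (GaloisField p m)) - C δ00) ^ n
      with hq
    have hqm : q.Monic := (monic_X_sub_C δ00).pow n
    have hqdeg : q.natDegree = n := by rw [hq, natDegree_pow, natDegree_X_sub_C, mul_one]
    have hq1 : q ≠ 1 := by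
      intro h1
      rw [h1, natDegree_one] at hqdeg
      omega
    set r := g %ₘ q with hr
    have hrdeg : r.natDegree < n := by
      have h9 := natDegree_modByMonic_lt g hqm hq1
      rw [← hr, hqdeg] at h9
      exact h9
    have hgdecomp : g = r + q * (g /ₘ q) := by
      rw [hr]
      exact (modByMonic_add_div g q).symm
    have hkill : uS p m s d0 d2 ^ 2 * θS p m s d0 d2 δ00 ^ a *
        βS p m s d0 d2 (q * (g /ₘ q)) = 0 := by
      rw [hq, map_mul, map_pow, ← thetaS_eq]
      have h8 : uS p m s d0 d2 ^ 2 * θS p m s d0 d2 δ00 ^ a *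
          (θS p m s d0 d2 δ00 ^ n * βS p m s d0 d2 (g /ₘ q)) =
          θS p m s d0 d2 δ00 ^ (a + n) * (uS p m s d0 d2 ^ 2 * βS p m s d0 d2 (g /ₘ q)) := by
        rw [pow_add]; ring
      rw [h8, han, theta_pow p m s d0 d2 δ00 hδ00]
      calc uS p m s d0 d2 ^ 2 * βS p m s d0 d2 (C d2) *
            (uS p m s d0 d2 ^ 2 * βS p m s d0 d2 (g /ₘ q))
          = uS p m s d0 d2 ^ 3 *
            (uS p m s d0 d2 * (βS p m s d0 d2 (C d2) * βS p m s d0 d2 (g /ₘ q))) := by ring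
        _ = 0 := by rw [hu3, zero_mul (uS p m s d0 d2 * (βS p m s d0 d2 (C d2) * βS p m s d0 d2 (g /ₘ q)))]
    have hc2 : c = uS p m s d0 d2 ^ 2 * θS p m s d0 d2 δ00 ^ a * βS p m s d0 d2 r := by
      have h11 : βS p m s d0 d2 g = βS p m s d0 d2 r + βS p m s d0 d2 (q * (g /ₘ q)) := by
        conv_lhs => rw [hgdecomp]
        exact map_add _ _ _
      rw [h6, h11, mul_add, hkill, add_zero]
    set r' := r.comp (X + C δ00) with hr'
    have hr'deg : r'.natDegree < n := by
      have h9 : r'.natDegree ≤ r.natDegree * (X + C δ00).natDegree := natDegree_comp_le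
      rw [natDegree_X_add_C, mul_one] at h9
      omega
    have hrr : r'.comp (X - C δ00) = r := by
      rw [hr', Polynomial.comp_assoc]
      rw [show ((X : Polynomial (GaloisField p m)) + C δ00).comp (X - C δ00) = X by
        rw [Polynomial.add_comp, Polynomial.X_comp, Polynomial.C_comp]; ring]
      rw [Polynomial.comp_X]
    have hsum : r = ∑ i : Fin n, C (r'.coeff (i : ℕ)) * (X - C δ00) ^ (i : ℕ) := by
      have h9 := r'.as_sum_range' n hr'deg
      have h10 : r = (∑ i ∈ Finset.range n, (monomial i (r'.coeff i))).comp (X - C δ00) := by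
        rw [← h9, hrr]
      rw [h10, Polynomial.sum_comp,
        Fin.sum_univ_eq_sum_range (fun i => C (r'.coeff i) * (X - C δ00) ^ i) n]
      refine Finset.sum_congr rfl fun i _ => ?_
      rw [← C_mul_X_pow_eq_monomial, Polynomial.mul_comp, Polynomial.C_comp,
        Polynomial.pow_comp, Polynomial.X_comp]
    refine ⟨fun j : Fin n => r'.coeff (j : ℕ), Subtype.ext ?_⟩
    show uS p m s d0 d2 ^ 2 * θS p m s d0 d2 δ00 ^ a * βS p m s d0 d2 (P _) = c
    have hPv : P (fun j : Fin n => r'.coeff (j : ℕ)) = r := hsum.symm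
    rw [hPv]
    exact hc2.symm
  have e1 : Nat.card (Fin n → GaloisField p m) = Nat.card ↥(Ideal.span {gen}) :=
    Nat.card_congr (Equiv.ofBijective f ⟨hinj, hsurj⟩)
  rw [← e1, Nat.card_fun]
  have e2 : Nat.card (GaloisField p m) = p ^ m := GaloisField.card p m hm
  have e3 : Nat.card (Fin n) = n := by simp
  rw [e2, e3, ← pow_mul]

end Aux5

/-- Let `0 ≤ a ≤ p^s − 1` and let `C = ⟨u²(x − δ_{0,0})^a⟩ ⊆ S`.  Then
`Tor₀(C)` and `Tor₁(C)` are the zero ideal of `𝔽_{p^m}[x]/⟨(x − δ_{0,0})^{p^s}⟩` (so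
`T₀(C) = T₁(C) = p^s`), `Tor₂(C) = ⟨(x − δ_{0,0})^a⟩` (so `T₂(C) = a`), and `C` has exactly
`p^{m(p^s − a)}` elements.  Here `Torᵢ(C) = μ({c ∈ S : uⁱ·c ∈ C})` where `μ : S →
𝔽_{p^m}[x]/⟨(x − δ_{0,0})^{p^s}⟩` is reduction modulo `u`. -/
theorem stmt_12 (p m s : ℕ) [Fact p.Prime] (hm : m ≠ 0)
    (d0 d2 : GaloisField p m) (hd0 : d0 ≠ 0) (hd2 : d2 ≠ 0)
    (δ00 : GaloisField p m) (hδ00 : δ00 ^ p ^ s = d0)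
    (a : ℕ) (ha : a ≤ p ^ s - 1) :
    muS p m s d0 d2 δ00 hδ00 ''
        {c : Sdel p m s d0 d2 | c ∈ Ideal.span {uS p m s d0 d2 ^ 2 * θS p m s d0 d2 δ00 ^ a}} =
      {0} ∧
    muS p m s d0 d2 δ00 hδ00 ''
        {c : Sdel p m s d0 d2 |
          uS p m s d0 d2 * c ∈ Ideal.span {uS p m s d0 d2 ^ 2 * θS p m s d0 d2 δ00 ^ a}} =
      {0} ∧
    muS p m s d0 d2 δ00 hδ00 ''
        {c : Sdel p m s d0 d2 |
          uS p m s d0 d2 ^ 2 * c ∈ Ideal.span {uS p m s d0 d2 ^ 2 * θS p m s d0 d2 δ00 ^ a}} =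
      ↑(Ideal.span {mkQbar p m s δ00 ((X : Polynomial (GaloisField p m)) - C δ00) ^ a}) ∧
    Nat.card (Ideal.span {uS p m s d0 d2 ^ 2 * θS p m s d0 d2 δ00 ^ a}) =
      p ^ (m * (p ^ s - a)) := by
  refine ⟨?_, ?_, ?_, ?_⟩
  · apply Set.eq_singleton_iff_unique_mem.mpr
    refine ⟨⟨0, ?_, map_zero _⟩, ?_⟩
    · show (0 : Sdel p m s d0 d2) ∈ Ideal.span {uS p m s d0 d2 ^ 2 * θS p m s d0 d2 δ00 ^ a}
      exact Ideal.zero_mem _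
    rintro y ⟨c, hc, rfl⟩
    rw [Set.mem_setOf_eq, S_mem_span] at hc
    obtain ⟨t, ht⟩ := hc
    rw [ht]
    simp [map_mul, map_pow, mu_u p m s d0 d2 δ00 hδ00]
  · apply Set.eq_singleton_iff_unique_mem.mpr
    constructor
    · refine ⟨0, ?_, map_zero _⟩
      show uS p m s d0 d2 * 0 ∈ Ideal.span {uS p m s d0 d2 ^ 2 * θS p m s d0 d2 δ00 ^ a}
      rw [mul_zero (uS p m s d0 d2)]
      exact Ideal.zero_mem _
    · rintro y ⟨c, hc, rfl⟩
      rw [Set.mem_setOf_eq, S_mem_span] at hc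
      obtain ⟨t, ht⟩ := hc
      have hz : uS p m s d0 d2 * (c - uS p m s d0 d2 * (θS p m s d0 d2 δ00 ^ a * t)) = 0 := by
        linear_combination ht
      obtain ⟨d, hd⟩ := S_u_ann p m s d0 d2 _ hz
      have hc' : c = uS p m s d0 d2 * (θS p m s d0 d2 δ00 ^ a * t) + uS p m s d0 d2 ^ 2 * d := by
        linear_combination hd
      rw [hc']
      simp [map_add, map_mul, map_pow, mu_u p m s d0 d2 δ00 hδ00]
  · ext y
    constructor
    · rintro ⟨c, hc, rfl⟩
      rw [Set.mem_setOf_eq, S_mem_span] at hc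
      obtain ⟨t, ht⟩ := hc
      have hz : uS p m s d0 d2 ^ 2 * (c - θS p m s d0 d2 δ00 ^ a * t) = 0 := by
        linear_combination ht
      obtain ⟨d, hd⟩ := S_u2_ann p m s d0 d2 _ hz
      have hc' : c = θS p m s d0 d2 δ00 ^ a * t + uS p m s d0 d2 * d := by
        linear_combination hd
      rw [SetLike.mem_coe, Ideal.mem_span_singleton]
      refine ⟨muS p m s d0 d2 δ00 hδ00 t, ?_⟩
      rw [hc', map_add, map_mul, map_mul, mu_u p m s d0 d2 δ00 hδ00, zero_mul, add_zero,
        map_pow, mu_theta p m s d0 d2 δ00 hδ00]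
    · intro hy
      rw [SetLike.mem_coe, Ideal.mem_span_singleton] at hy
      obtain ⟨qq, hq⟩ := hy
      obtain ⟨w, hw⟩ := Ideal.Quotient.mk_surjective qq
      refine ⟨θS p m s d0 d2 δ00 ^ a * βS p m s d0 d2 w, ?_, ?_⟩
      · rw [Set.mem_setOf_eq, S_mem_span]
        exact ⟨βS p m s d0 d2 w, by ring⟩
      · rw [map_mul, map_pow, mu_theta p m s d0 d2 δ00 hδ00, mu_beta p m s d0 d2 δ00 hδ00, hq]
        exact congrArg (fun z => mkQbar p m s δ00 (X - C δ00) ^ a * z) hw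
  · exact card_span p m s d0 d2 δ00 hm hδ00 a ha
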